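/- The gadget graph D(i,i',c,c) (the same-colour injectivity gadget) consisting of two disjoint k-cliques L = {l_1,…,l_k} and R = {r_1,…,r_k}, pigeon vertices i connected to l_1 and i' connected to r_1, a vertex w precoloured c connected to l_2,…,l_{k-1}, a vertex w' precoloured c connected to r_2,…,r_{k-1}, and an edge between l_k and r_k, has the property: a proper k-colouring of the gadget extending the precolouring and assigning colours b to i and b' to i' exists if and only if (b,b') ≠ (c,c). -/

import Mathlib

/-- Vertices of the same-colour injectivity gadget `D(i,i',c,c)`:
two pigeon vertices, a left `k`-clique, a right `k`-clique, and two
precoloured vertices `w`, `w'`. -/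
def GadgetV (k : ℕ) : Type := Fin 2 ⊕ Fin k ⊕ Fin k ⊕ Fin 2

/-- Pigeon vertices `i` (for `t = 0`) and `i'` (for `t = 1`). -/
def Pg (k : ℕ) (t : Fin 2) : GadgetV k := Sum.inl t

/-- Left-clique vertex `l_{a+1}`. -/
def Lg (k : ℕ) (a : Fin k) : GadgetV k := Sum.inr (Sum.inl a)

/-- Right-clique vertex `r_{a+1}`. -/
def Rg (k : ℕ) (a : Fin k) : GadgetV k := Sum.inr (Sum.inr (Sum.inl a))

/-- Precoloured vertices `w` (for `t = 0`) and `w'` (for `t = 1`). -/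
def Wg (k : ℕ) (t : Fin 2) : GadgetV k := Sum.inr (Sum.inr (Sum.inr t))

/-- The same-colour gadget graph `D(i,i',c,c)`: two disjoint `k`-cliques,
pigeon `i` joined to `l_1`, pigeon `i'` joined to `r_1`, vertex `w` joined to
`l_2,…,l_{k-1}`, vertex `w'` joined to `r_2,…,r_{k-1}`, and an edge between
`l_k` and `r_k`. -/
def gadgetSame (k : ℕ) : SimpleGraph (GadgetV k) :=
  SimpleGraph.fromRel (fun x y =>
    (∃ a b : Fin k, a ≠ b ∧ x = Lg k a ∧ y = Lg k b) ∨
    (∃ a b : Fin k, a ≠ b ∧ x = Rg k a ∧ y = Rg k b) ∨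
    (∃ a : Fin k, (a : ℕ) = 0 ∧ x = Pg k 0 ∧ y = Lg k a) ∨
    (∃ a : Fin k, (a : ℕ) = 0 ∧ x = Pg k 1 ∧ y = Rg k a) ∨
    (∃ a : Fin k, 1 ≤ (a : ℕ) ∧ (a : ℕ) ≤ k - 2 ∧ x = Wg k 0 ∧ y = Lg k a) ∨
    (∃ a : Fin k, 1 ≤ (a : ℕ) ∧ (a : ℕ) ≤ k - 2 ∧ x = Wg k 1 ∧ y = Rg k a) ∨
    (∃ a b : Fin k, (a : ℕ) = k - 1 ∧ (b : ℕ) = k - 1 ∧ x = Lg k a ∧ y = Rg k b))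

/-- The colouring built from colours for the pigeons, cliques and `w`-vertices. -/
def gcol (k : ℕ) (b b' c : Fin k) (f g : Fin k → Fin k) : GadgetV k → Fin k :=
  Sum.elim (fun t => if (t : ℕ) = 0 then b else b')
    (Sum.elim f (Sum.elim g (fun _ => c)))

lemma gcol_proper (k : ℕ) (c b b' : Fin k) (f g : Fin k → Fin k)
    (hf : Function.Injective f) (hg : Function.Injective g)
    (hfb : ∀ a : Fin k, (a : ℕ) = 0 → f a ≠ b)
    (hgb : ∀ a : Fin k, (a : ℕ) = 0 → g a ≠ b')
    (hfc : ∀ a : Fin k, 1 ≤ (a : ℕ) → (a : ℕ) ≤ k - 2 → f a ≠ c)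
    (hgc : ∀ a : Fin k, 1 ≤ (a : ℕ) → (a : ℕ) ≤ k - 2 → g a ≠ c)
    (hend : ∀ a a' : Fin k, (a : ℕ) = k - 1 → (a' : ℕ) = k - 1 → f a ≠ g a') :
    ∀ u v, (gadgetSame k).Adj u v →
      gcol k b b' c f g u ≠ gcol k b b' c f g v := by
  intro u v huv
  simp only [gadgetSame, SimpleGraph.fromRel_adj] at huv
  obtain ⟨hne, h | h⟩ := huv
  on_goal 2 => apply Ne.symm
  all_goals
    rcases h with ⟨a1,a2,hne',rfl,rfl⟩|⟨a1,a2,hne',rfl,rfl⟩|⟨a1,h1,rfl,rfl⟩|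
      ⟨a1,h1,rfl,rfl⟩|⟨a1,h1,h2,rfl,rfl⟩|⟨a1,h1,h2,rfl,rfl⟩|⟨a1,a2,h1,h2,rfl,rfl⟩ <;>
    simp only [gcol, Pg, Lg, Rg, Wg, Sum.elim_inl, Sum.elim_inr, Fin.val_zero,
      Fin.val_one, if_true, if_pos, Fin.isValue, ne_eq] <;>
    norm_num <;>
    first
    | exact fun hh => hne' (hf hh)
    | exact fun hh => hne' (hg hh)
    | exact Ne.symm (hfb a1 h1)
    | exact Ne.symm (hgb a1 h1)
    | exact Ne.symm (hfc a1 h1 h2)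
    | exact Ne.symm (hgc a1 h1 h2)
    | exact hend a1 a2 h1 h2

theorem stmt_6 (k : ℕ) (hk : 3 ≤ k) (c b b' : Fin k) :
    (∃ χ : GadgetV k → Fin k,
      (∀ u v, (gadgetSame k).Adj u v → χ u ≠ χ v) ∧
      χ (Wg k 0) = c ∧ χ (Wg k 1) = c ∧
      χ (Pg k 0) = b ∧ χ (Pg k 1) = b') ↔
    (b, b') ≠ (c, c) := by
  -- adjacency helper lemmas
  have adjL : ∀ a1 a2 : Fin k, a1 ≠ a2 → (gadgetSame k).Adj (Lg k a1) (Lg k a2) := by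
    intro a1 a2 h
    simp only [gadgetSame, SimpleGraph.fromRel_adj]
    exact ⟨fun hEq => h (Sum.inl.inj (Sum.inr.inj hEq)),
      Or.inl (Or.inl ⟨a1, a2, h, rfl, rfl⟩)⟩
  have adjR : ∀ a1 a2 : Fin k, a1 ≠ a2 → (gadgetSame k).Adj (Rg k a1) (Rg k a2) := by
    intro a1 a2 h
    simp only [gadgetSame, SimpleGraph.fromRel_adj]
    exact ⟨fun hEq => h (Sum.inl.inj (Sum.inr.inj (Sum.inr.inj hEq))),
      Or.inl (Or.inr (Or.inl ⟨a1, a2, h, rfl, rfl⟩))⟩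
  have adjPL : ∀ a : Fin k, (a : ℕ) = 0 → (gadgetSame k).Adj (Pg k 0) (Lg k a) := by
    intro a h
    simp only [gadgetSame, SimpleGraph.fromRel_adj]
    exact ⟨fun hEq => by simp [Pg, Lg] at hEq,
      Or.inl (Or.inr (Or.inr (Or.inl ⟨a, h, trivial, rfl⟩)))⟩
  have adjPR : ∀ a : Fin k, (a : ℕ) = 0 → (gadgetSame k).Adj (Pg k 1) (Rg k a) := by
    intro a h
    simp only [gadgetSame, SimpleGraph.fromRel_adj]
    exact ⟨fun hEq => by simp [Pg, Rg] at hEq,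
      Or.inl (Or.inr (Or.inr (Or.inr (Or.inl ⟨a, h, trivial, rfl⟩))))⟩
  have adjWL : ∀ a : Fin k, 1 ≤ (a : ℕ) → (a : ℕ) ≤ k - 2 →
      (gadgetSame k).Adj (Wg k 0) (Lg k a) := by
    intro a h1 h2
    simp only [gadgetSame, SimpleGraph.fromRel_adj]
    exact ⟨fun hEq => (by simp only [Wg, Lg] at hEq; cases hEq),
      Or.inl (Or.inr (Or.inr (Or.inr (Or.inr (Or.inl ⟨a, h1, h2, trivial, rfl⟩)))))⟩
  have adjWR : ∀ a : Fin k, 1 ≤ (a : ℕ) → (a : ℕ) ≤ k - 2 →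
      (gadgetSame k).Adj (Wg k 1) (Rg k a) := by
    intro a h1 h2
    simp only [gadgetSame, SimpleGraph.fromRel_adj]
    exact ⟨fun hEq => (by simp only [Wg, Rg] at hEq; cases hEq),
      Or.inl (Or.inr (Or.inr (Or.inr (Or.inr (Or.inr (Or.inl ⟨a, h1, h2, trivial, rfl⟩))))))⟩
  have adjLR : ∀ a a' : Fin k, (a : ℕ) = k - 1 → (a' : ℕ) = k - 1 →
      (gadgetSame k).Adj (Lg k a) (Rg k a') := by
    intro a a' h1 h2
    simp only [gadgetSame, SimpleGraph.fromRel_adj]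
    exact ⟨fun hEq => (by simp only [Lg, Rg] at hEq; cases hEq),
      Or.inl (Or.inr (Or.inr (Or.inr (Or.inr (Or.inr (Or.inr ⟨a, a', h1, h2, rfl, rfl⟩))))))⟩
  constructor
  · rintro ⟨χ, hprop, hw0, hw1, hp0, hp1⟩ hbc
    have hb : b = c := congrArg Prod.fst hbc
    have hb' : b' = c := congrArg Prod.snd hbc
    have hinjL : Function.Injective (fun a => χ (Lg k a)) := by
      intro a1 a2 hEq
      by_contra hne
      exact hprop _ _ (adjL a1 a2 hne) hEq
    have hinjR : Function.Injective (fun a => χ (Rg k a)) := by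
      intro a1 a2 hEq
      by_contra hne
      exact hprop _ _ (adjR a1 a2 hne) hEq
    obtain ⟨aL, haL⟩ := (Finite.injective_iff_surjective.mp hinjL) c
    obtain ⟨aR, haR⟩ := (Finite.injective_iff_surjective.mp hinjR) c
    simp only at haL haR
    have hLm : (aL : ℕ) = k - 1 := by
      by_contra hne
      have hlt := aL.isLt
      by_cases h0 : (aL : ℕ) = 0
      · exact hprop _ _ (adjPL aL h0) (by rw [hp0, haL, hb])
      · exact hprop _ _ (adjWL aL (by omega) (by omega)) (by rw [hw0, haL])
    have hRm : (aR : ℕ) = k - 1 := by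
      by_contra hne
      have hlt := aR.isLt
      by_cases h0 : (aR : ℕ) = 0
      · exact hprop _ _ (adjPR aR h0) (by rw [hp1, haR, hb'])
      · exact hprop _ _ (adjWR aR (by omega) (by omega)) (by rw [hw1, haR])
    exact hprop _ _ (adjLR aL aR hLm hRm) (by rw [haL, haR])
  · intro h
    obtain ⟨z, hz⟩ : ∃ z : Fin k, (z : ℕ) = 0 := ⟨⟨0, by omega⟩, rfl⟩
    obtain ⟨o, ho⟩ : ∃ o : Fin k, (o : ℕ) = 1 := ⟨⟨1, by omega⟩, rfl⟩
    obtain ⟨m, hm⟩ : ∃ m : Fin k, (m : ℕ) = k - 1 := ⟨⟨k - 1, by omega⟩, rfl⟩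
    have hzm : z ≠ m := fun hEq => by rw [hEq, hm] at hz; omega
    have hzo : z ≠ o := fun hEq => by rw [hEq, ho] at hz; omega
    have hom : o ≠ m := fun hEq => by rw [hEq, hm] at ho; omega
    have swap_eq_c : ∀ (x a : Fin k), Equiv.swap x c a = c → a = x := by
      intro x a hEq
      exact (Equiv.swap x c).injective (hEq.trans (Equiv.swap_apply_left x c).symm)
    by_cases hbc : b = c
    · have hb' : b' ≠ c := fun hh => h (by rw [hbc, hh])
      refine ⟨gcol k b b' c (Equiv.swap m c) (Equiv.swap z c),
        gcol_proper k c b b' _ _ (Equiv.swap m c).injective (Equiv.swap z c).injective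
          ?_ ?_ ?_ ?_ ?_, by simp [gcol, Wg], by simp [gcol, Wg], by simp [gcol, Pg],
          by simp [gcol, Pg]⟩
      · intro a ha hEq
        rw [hbc] at hEq
        have := swap_eq_c m a hEq
        rw [this, hm] at ha
        omega
      · intro a ha hEq
        have haz : a = z := Fin.ext (by rw [ha, hz])
        rw [haz, Equiv.swap_apply_left] at hEq
        exact hb' hEq.symm
      · intro a h1 h2 hEq
        have := swap_eq_c m a hEq
        rw [this, hm] at h2
        omega
      · intro a h1 h2 hEq
        have := swap_eq_c z a hEq
        rw [this, hz] at h1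
        omega
      · intro a a' ha ha' hEq
        have haa : a = m := Fin.ext (by rw [ha, hm])
        have haa' : a' = m := Fin.ext (by rw [ha', hm])
        rw [haa, haa', Equiv.swap_apply_left] at hEq
        exact hzm (swap_eq_c z m hEq.symm).symm
    · by_cases hb'c : b' = c
      · refine ⟨gcol k b b' c (Equiv.swap z c) (Equiv.swap m c),
          gcol_proper k c b b' _ _ (Equiv.swap z c).injective (Equiv.swap m c).injective
            ?_ ?_ ?_ ?_ ?_, by simp [gcol, Wg], by simp [gcol, Wg], by simp [gcol, Pg],
            by simp [gcol, Pg]⟩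
        · intro a ha hEq
          have haz : a = z := Fin.ext (by rw [ha, hz])
          rw [haz, Equiv.swap_apply_left] at hEq
          exact hbc hEq.symm
        · intro a ha hEq
          rw [hb'c] at hEq
          have := swap_eq_c m a hEq
          rw [this, hm] at ha
          omega
        · intro a h1 h2 hEq
          have := swap_eq_c z a hEq
          rw [this, hz] at h1
          omega
        · intro a h1 h2 hEq
          have := swap_eq_c m a hEq
          rw [this, hm] at h2
          omega
        · intro a a' ha ha' hEq
          have haa : a = m := Fin.ext (by rw [ha, hm])
          have haa' : a' = m := Fin.ext (by rw [ha', hm])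
          rw [haa, haa', Equiv.swap_apply_left] at hEq
          exact hzm (swap_eq_c z m hEq).symm
      · refine ⟨gcol k b b' c (Equiv.swap z c) (fun a => Equiv.swap z c (Equiv.swap m o a)),
          gcol_proper k c b b' _ _ (Equiv.swap z c).injective
            ((Equiv.swap z c).injective.comp (Equiv.swap m o).injective)
            ?_ ?_ ?_ ?_ ?_, by simp [gcol, Wg], by simp [gcol, Wg], by simp [gcol, Pg],
            by simp [gcol, Pg]⟩
        · intro a ha hEq
          have haz : a = z := Fin.ext (by rw [ha, hz])
          rw [haz, Equiv.swap_apply_left] at hEq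
          exact hbc hEq.symm
        · intro a ha hEq
          have haz : a = z := Fin.ext (by rw [ha, hz])
          rw [haz, Equiv.swap_apply_of_ne_of_ne hzm hzo, Equiv.swap_apply_left] at hEq
          exact hb'c hEq.symm
        · intro a h1 h2 hEq
          have := swap_eq_c z a hEq
          rw [this, hz] at h1
          omega
        · intro a h1 h2 hEq
          have h3 := swap_eq_c z (Equiv.swap m o a) hEq
          have h4 : a = Equiv.swap m o z := by
            rw [← h3, Equiv.swap_apply_self]
          rw [Equiv.swap_apply_of_ne_of_ne hzm hzo] at h4
          rw [h4, hz] at h1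
          omega
        · intro a a' ha ha' hEq
          have haa : a = m := Fin.ext (by rw [ha, hm])
          have haa' : a' = m := Fin.ext (by rw [ha', hm])
          rw [haa, haa', Equiv.swap_apply_left] at hEq
          exact hom (((Equiv.swap z c).injective hEq).symm)
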